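/- Let p^V(t,x,y) be the Dirichlet heat kernel of a cone V with vertex 0, given for x = rθ, y = ρω by p^V(t,x,y) = t^{-1}(rρ)^{-(n/2-1)} e^{-(r²+ρ²)/(2t)} Σ_{i≥1} I_{α^i}(rρ/t) m^i(θ) m^i(ω), where 0 < α¹ < α² ≤ ⋯ and (m^i) is an orthonormal basis of eigenfunctions. Then for fixed x, y in V, t^{1+α¹} p^V(t,x,y) → v(x)v(y)/(2^{α¹} Γ(1+α¹)) as t → ∞, where v(rθ) = r^{α¹-(n/2-1)} m¹(θ). -/

import Mathlib

open Filter

/-- The modified Bessel function of the first kind of order `ν`. -/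
noncomputable def besselI (ν z : ℝ) : ℝ :=
  ∑' k : ℕ, (z / 2) ^ (ν + 2 * (k : ℝ)) / ((Nat.factorial k : ℝ) * Real.Gamma (ν + k + 1))

lemma exp_tsum (x : ℝ) : ∑' k : ℕ, x ^ k / (Nat.factorial k : ℝ) = Real.exp x := by
  rw [Real.exp_eq_exp_ℝ, NormedSpace.exp_eq_tsum (𝕂 := ℝ)]
  simp [smul_eq_mul, div_eq_inv_mul]

lemma gamma_fact (ν : ℝ) (hν : 0 < ν) (k : ℕ) :
    (Nat.factorial k : ℝ) * Real.Gamma (ν + 1) ≤ Real.Gamma (ν + k + 1) := by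
  induction k with
  | zero => simp
  | succ k ih =>
    have h1 : (0:ℝ) < ν + k + 1 := by positivity
    have h2 : Real.Gamma (ν + ((k+1:ℕ):ℝ) + 1) = (ν + k + 1) * Real.Gamma (ν + k + 1) := by
      rw [show (ν + ((k+1:ℕ):ℝ) + 1 : ℝ) = (ν + k + 1) + 1 by push_cast; ring,
        Real.Gamma_add_one h1.ne']
    have h3 : (0:ℝ) < Real.Gamma (ν + k + 1) := Real.Gamma_pos_of_pos (by positivity)
    have h4 : ((k+1:ℕ) : ℝ) * ((Nat.factorial k : ℝ) * Real.Gamma (ν + 1)) ≤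
        (ν + k + 1) * Real.Gamma (ν + k + 1) := by
      have : ((k+1:ℕ):ℝ) ≤ ν + k + 1 := by push_cast; linarith
      have hf : (0:ℝ) ≤ (Nat.factorial k : ℝ) * Real.Gamma (ν + 1) := by
        positivity
      calc ((k+1:ℕ):ℝ) * ((Nat.factorial k : ℝ) * Real.Gamma (ν + 1))
          ≤ (ν + k + 1) * ((Nat.factorial k : ℝ) * Real.Gamma (ν + 1)) := by
            apply mul_le_mul_of_nonneg_right this hf
        _ ≤ (ν + k + 1) * Real.Gamma (ν + k + 1) :=
            mul_le_mul_of_nonneg_left ih h1.le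
    rw [h2]
    calc (Nat.factorial (k+1) : ℝ) * Real.Gamma (ν + 1)
        = ((k+1:ℕ):ℝ) * ((Nat.factorial k : ℝ) * Real.Gamma (ν + 1)) := by
          rw [Nat.factorial_succ]; push_cast; ring
      _ ≤ _ := h4

lemma besselI_term_eq (ν z : ℝ) (hz : 0 < z) (k : ℕ) :
    (z / 2) ^ (ν + 2 * (k : ℝ)) = (z/2) ^ ν * ((z/2)^2) ^ k := by
  rw [Real.rpow_add (by positivity : (0:ℝ) < z/2)]
  congr 1
  rw [show (2*(k:ℝ)) = ((2*k : ℕ):ℝ) by push_cast; ring, Real.rpow_natCast, pow_mul]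

lemma besselI_term_le (ν z : ℝ) (hν : 0 < ν) (hz : 0 < z) (k : ℕ) :
    (z / 2) ^ (ν + 2 * (k : ℝ)) / ((Nat.factorial k : ℝ) * Real.Gamma (ν + k + 1)) ≤
      (z/2) ^ ν / Real.Gamma (ν + 1) * (((z/2)^2) ^ k / (Nat.factorial k : ℝ)) := by
  rw [besselI_term_eq ν z hz]
  have hΓ1 : (0:ℝ) < Real.Gamma (ν + 1) := Real.Gamma_pos_of_pos (by positivity)
  have hΓk : (0:ℝ) < Real.Gamma (ν + k + 1) := Real.Gamma_pos_of_pos (by positivity)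
  have hfk : (0:ℝ) < (Nat.factorial k : ℝ) := by exact_mod_cast Nat.factorial_pos k
  have h1 : (Nat.factorial k : ℝ) * Real.Gamma (ν + 1) ≤
      (Nat.factorial k : ℝ) * Real.Gamma (ν + k + 1) := by
    calc (Nat.factorial k : ℝ) * Real.Gamma (ν + 1)
        ≤ Real.Gamma (ν + k + 1) := gamma_fact ν hν k
      _ ≤ (Nat.factorial k : ℝ) * Real.Gamma (ν + k + 1) := by
          have hf1 : (1:ℝ) ≤ (Nat.factorial k : ℝ) := by
            exact_mod_cast Nat.one_le_iff_ne_zero.mpr (Nat.factorial_ne_zero k)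
          nlinarith
  have hnum : (0:ℝ) ≤ (z/2) ^ ν * ((z/2)^2) ^ k := by positivity
  calc (z/2) ^ ν * ((z/2)^2) ^ k / ((Nat.factorial k : ℝ) * Real.Gamma (ν + k + 1))
      ≤ (z/2) ^ ν * ((z/2)^2) ^ k / ((Nat.factorial k : ℝ) * Real.Gamma (ν + 1)) := by
        apply div_le_div_of_nonneg_left hnum (by positivity) h1
    _ = (z/2) ^ ν / Real.Gamma (ν + 1) * (((z/2)^2) ^ k / (Nat.factorial k : ℝ)) := by
        field_simp

lemma besselI_summable (ν z : ℝ) (hν : 0 < ν) (hz : 0 < z) :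
    Summable (fun k : ℕ => (z / 2) ^ (ν + 2 * (k : ℝ)) /
      ((Nat.factorial k : ℝ) * Real.Gamma (ν + k + 1))) := by
  apply Summable.of_nonneg_of_le
  · intro k
    have : (0:ℝ) < Real.Gamma (ν + k + 1) := Real.Gamma_pos_of_pos (by positivity)
    have hfk : (0:ℝ) < (Nat.factorial k : ℝ) := by exact_mod_cast Nat.factorial_pos k
    positivity
  · exact besselI_term_le ν z hν hz
  · exact (Real.summable_pow_div_factorial ((z/2)^2)).mul_left _

lemma besselI_le (ν z : ℝ) (hν : 0 < ν) (hz : 0 < z) :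
    besselI ν z ≤ (z/2) ^ ν / Real.Gamma (ν + 1) * Real.exp ((z/2)^2) := by
  have h := Summable.tsum_le_tsum (besselI_term_le ν z hν hz) (besselI_summable ν z hν hz)
    ((Real.summable_pow_div_factorial ((z/2)^2)).mul_left _)
  rw [tsum_mul_left, exp_tsum] at h
  exact h

lemma le_besselI (ν z : ℝ) (hν : 0 < ν) (hz : 0 < z) :
    (z/2) ^ ν / Real.Gamma (ν + 1) ≤ besselI ν z := by
  have h := Summable.le_tsum (besselI_summable ν z hν hz) 0 (fun j _ => by
    have : (0:ℝ) < Real.Gamma (ν + j + 1) := Real.Gamma_pos_of_pos (by positivity)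
    have hfk : (0:ℝ) < (Nat.factorial j : ℝ) := by exact_mod_cast Nat.factorial_pos j
    positivity)
  simpa [besselI] using h

lemma besselI_pos (ν z : ℝ) (hν : 0 < ν) (hz : 0 < z) : 0 < besselI ν z := by
  have hΓ1 : (0:ℝ) < Real.Gamma (ν + 1) := Real.Gamma_pos_of_pos (by positivity)
  have : (0:ℝ) < (z/2) ^ ν / Real.Gamma (ν + 1) := by positivity
  linarith [le_besselI ν z hν hz]

/-- The Dirichlet heat kernel of a cone with vertex `0` and opening `D`, in polar
coordinates `x = rθ`, `y = ρω`:
`p^V(t,x,y) = t^{-1}(rρ)^{-(n/2-1)} e^{-(r²+ρ²)/(2t)} Σ_i I_{α_i}(rρ/t) mᵢ(θ)mᵢ(ω)`. -/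
noncomputable def conePV (n : ℕ) {D : Type*} (α : ℕ → ℝ) (m : ℕ → D → ℝ)
    (t r ρ : ℝ) (θ ω : D) : ℝ :=
  (1 / t) * (r * ρ) ^ (-((n : ℝ) / 2 - 1)) * Real.exp (-(r ^ 2 + ρ ^ 2) / (2 * t)) *
    ∑' i : ℕ, besselI (α i) (r * ρ / t) * m i θ * m i ω

/-- for fixed `x = rθ`, `y = ρω` in the cone,
`t^{1+α¹} p^V(t,x,y) → v(x)v(y)/(2^{α¹} Γ(1+α¹))` as `t → ∞`, where
`v(rθ) = r^{α¹-(n/2-1)} m¹(θ)`.  (Eigenvalues `0 < λ¹ < λ² ≤ ⋯` are indexed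
here from `0`, so `α 0` plays the role of `α¹`.) -/
theorem cone_heat_kernel_time_asymptotics {D : Type*} (n : ℕ) (hn : 1 ≤ n)
    (lam : ℕ → ℝ) (m : ℕ → D → ℝ) (α : ℕ → ℝ)
    (hα : ∀ i, α i = Real.sqrt (lam i + ((n : ℝ) / 2 - 1) ^ 2))
    (hlam0 : 0 < lam 0) (hlam01 : lam 0 < lam 1) (hlammono : Monotone lam)
    (hmbdd : ∃ Cm : ℝ, ∀ i θ, |m i θ| ≤ Cm)
    (hsum : ∀ r ρ : ℝ, 0 < r → 0 < ρ →
      Summable (fun i : ℕ =>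
        (r * ρ) ^ (α i - ((n : ℝ) / 2 - 1)) / (2 ^ (α i) * Real.Gamma (1 + α i))))
    (r ρ : ℝ) (θ ω : D) (hr : 0 < r) (hρ : 0 < ρ)
    (hser : ∀ t : ℝ, 0 < t →
      Summable (fun i : ℕ => besselI (α i) (r * ρ / t) * m i θ * m i ω)) :
    Tendsto (fun t : ℝ => t ^ (1 + α 0) * conePV n α m t r ρ θ ω) atTop
      (nhds ((r ^ (α 0 - ((n : ℝ) / 2 - 1)) * m 0 θ) *
        (ρ ^ (α 0 - ((n : ℝ) / 2 - 1)) * m 0 ω) / (2 ^ (α 0) * Real.Gamma (1 + α 0)))) := by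
  obtain ⟨Cm, hCm⟩ := hmbdd
  have hCm0 : 0 ≤ Cm := (abs_nonneg _).trans (hCm 0 θ)
  set c : ℝ := (n : ℝ) / 2 - 1 with hc
  have hrρ : 0 < r * ρ := mul_pos hr hρ
  have hαpos : ∀ i, 0 < α i := by
    intro i
    rw [hα]
    exact Real.sqrt_pos.2 (by nlinarith [sq_nonneg c, hlammono (Nat.zero_le i)])
  have hαle : ∀ i, α 0 ≤ α i := by
    intro i
    rw [hα, hα]
    exact Real.sqrt_le_sqrt (by nlinarith [hlammono (Nat.zero_le i)])
  have hαlt : ∀ i, i ≠ 0 → α 0 < α i := by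
    intro i hi
    rw [hα, hα]
    have h1 : lam 1 ≤ lam i := hlammono (Nat.one_le_iff_ne_zero.mpr hi)
    exact Real.sqrt_lt_sqrt (by nlinarith [sq_nonneg c]) (by nlinarith)
  set C : ℕ → ℝ := fun i => (r * ρ / 2) ^ (α i) / Real.Gamma (α i + 1) with hC
  have hΓpos : ∀ i, 0 < Real.Gamma (α i + 1) :=
    fun i => Real.Gamma_pos_of_pos (by linarith [hαpos i])
  have hCpos : ∀ i, 0 < C i := by
    intro i
    simp only [hC]
    exact div_pos (Real.rpow_pos_of_pos (by positivity) _) (hΓpos i)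
  have hCalt : ∀ i, C i = (r * ρ) ^ (α i) / (2 ^ (α i) * Real.Gamma (1 + α i)) := by
    intro i
    simp only [hC]
    rw [Real.div_rpow hrρ.le (by norm_num : (0:ℝ) ≤ 2), div_div, add_comm 1 (α i)]
  have hz : ∀ t : ℝ, 0 < t → 0 < r * ρ / t := fun t ht => by positivity
  have hkey : ∀ (i : ℕ) (t : ℝ), 0 < t →
      t ^ (α 0) * ((r * ρ / t / 2) ^ (α i) / Real.Gamma (α i + 1)) =
        t ^ (α 0 - α i) * C i := by
    intro i t ht
    simp only [hC]
    rw [show r * ρ / t / 2 = (r * ρ / 2) / t by ring, Real.div_rpow (by positivity) ht.le,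
      Real.rpow_sub ht]
    have h1 : t ^ (α i) ≠ 0 := (Real.rpow_pos_of_pos ht _).ne'
    field_simp
  have hexp0 : Tendsto (fun t : ℝ => r * ρ / t) atTop (nhds 0) :=
    tendsto_const_nhds.div_atTop tendsto_id
  have hexp1 : Tendsto (fun t : ℝ => Real.exp ((r * ρ / t / 2) ^ 2)) atTop (nhds 1) := by
    have h2 : Tendsto (fun t : ℝ => (r * ρ / t / 2) ^ 2) atTop (nhds 0) := by
      simpa using (hexp0.div_const 2).pow 2
    simpa [Function.comp_def] using (Real.continuous_exp.tendsto 0).comp h2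
  have hpow : ∀ i, Tendsto (fun t : ℝ => t ^ (α 0 - α i)) atTop
      (nhds (if i = 0 then 1 else 0)) := by
    intro i
    rcases eq_or_ne i 0 with rfl | hi
    · simp only [sub_self, Real.rpow_zero, if_pos rfl]
      exact tendsto_const_nhds
    · rw [if_neg hi]
      have h1 : 0 < α i - α 0 := sub_pos.2 (hαlt i hi)
      exact (tendsto_rpow_neg_atTop h1).congr (fun x => by rw [neg_sub])
  have hsq : ∀ i, Tendsto (fun t : ℝ => t ^ (α 0) * besselI (α i) (r * ρ / t)) atTop
      (nhds ((if i = 0 then 1 else 0) * C i)) := by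
    intro i
    have hlo : Tendsto (fun t : ℝ => t ^ (α 0 - α i) * C i) atTop
        (nhds ((if i = 0 then 1 else 0) * C i)) := (hpow i).mul_const _
    have hhi : Tendsto (fun t : ℝ => t ^ (α 0 - α i) * C i * Real.exp ((r * ρ / t / 2) ^ 2))
        atTop (nhds ((if i = 0 then 1 else 0) * C i)) := by
      simpa using ((hpow i).mul_const (C i)).mul hexp1
    apply tendsto_of_tendsto_of_tendsto_of_le_of_le' hlo hhi
    · filter_upwards [eventually_gt_atTop (0 : ℝ)] with t ht
      have h1 := mul_le_mul_of_nonneg_left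
        (le_besselI (α i) (r * ρ / t) (hαpos i) (hz t ht))
        (Real.rpow_nonneg ht.le (α 0))
      rwa [hkey i t ht] at h1
    · filter_upwards [eventually_gt_atTop (0 : ℝ)] with t ht
      have h1 := mul_le_mul_of_nonneg_left
        (besselI_le (α i) (r * ρ / t) (hαpos i) (hz t ht))
        (Real.rpow_nonneg ht.le (α 0))
      calc t ^ (α 0) * besselI (α i) (r * ρ / t)
          ≤ t ^ (α 0) * ((r * ρ / t / 2) ^ (α i) / Real.Gamma (α i + 1) *
              Real.exp ((r * ρ / t / 2) ^ 2)) := h1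
        _ = t ^ (α 0 - α i) * C i * Real.exp ((r * ρ / t / 2) ^ 2) := by
            rw [← mul_assoc, hkey i t ht]
  set f : ℝ → ℕ → ℝ :=
    fun t i => t ^ (α 0) * besselI (α i) (r * ρ / t) * (m i θ * m i ω) with hf
  set g : ℕ → ℝ := fun i => (if i = 0 then 1 else 0) * C i * (m i θ * m i ω) with hg
  set bound : ℕ → ℝ := fun i => (r * ρ) ^ (α i) / (2 ^ (α i) * Real.Gamma (1 + α i)) *
    (Real.exp (1 / 4) * (Cm * Cm)) with hbd
  have hbsum : Summable bound := by
    apply Summable.mul_right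
    apply ((hsum r ρ hr hρ).mul_left ((r * ρ) ^ c)).congr
    intro i
    rw [← mul_div_assoc, ← Real.rpow_add hrρ, show c + (α i - c) = α i by ring]
  have hab : ∀ i, Tendsto (fun t => f t i) atTop (nhds (g i)) := by
    intro i
    simp only [hf, hg]
    exact (hsq i).mul_const _
  have hbnd : ∀ᶠ t in atTop, ∀ i, ‖f t i‖ ≤ bound i := by
    filter_upwards [eventually_ge_atTop (max 1 (r * ρ))] with t ht i
    have ht1 : (1 : ℝ) ≤ t := le_trans (le_max_left _ _) ht
    have htr : r * ρ ≤ t := le_trans (le_max_right _ _) ht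
    have htpos : 0 < t := lt_of_lt_of_le one_pos ht1
    have hbI : 0 < besselI (α i) (r * ρ / t) := besselI_pos _ _ (hαpos i) (hz t htpos)
    have htα : 0 < t ^ (α 0) := Real.rpow_pos_of_pos htpos _
    have step1 : t ^ (α 0) * besselI (α i) (r * ρ / t) ≤ C i * Real.exp (1 / 4) := by
      have h1 := mul_le_mul_of_nonneg_left
        (besselI_le (α i) (r * ρ / t) (hαpos i) (hz t htpos)) htα.le
      rw [← mul_assoc, hkey i t htpos] at h1
      have h2 : t ^ (α 0 - α i) ≤ 1 :=
        Real.rpow_le_one_of_one_le_of_nonpos ht1 (sub_nonpos.2 (hαle i))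
      have h3 : Real.exp ((r * ρ / t / 2) ^ 2) ≤ Real.exp (1 / 4) := by
        apply Real.exp_le_exp.2
        have hz1 : r * ρ / t ≤ 1 := (div_le_one htpos).2 htr
        have hz0 : 0 ≤ r * ρ / t := (hz t htpos).le
        nlinarith
      have h4 : t ^ (α 0 - α i) * C i ≤ 1 * C i :=
        mul_le_mul_of_nonneg_right h2 (hCpos i).le
      calc t ^ (α 0) * besselI (α i) (r * ρ / t)
          ≤ t ^ (α 0 - α i) * C i * Real.exp ((r * ρ / t / 2) ^ 2) := h1
        _ ≤ 1 * C i * Real.exp (1 / 4) :=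
            mul_le_mul h4 h3 (Real.exp_pos _).le (by nlinarith [hCpos i])
        _ = C i * Real.exp (1 / 4) := by ring
    simp only [hf, hbd, Real.norm_eq_abs]
    have habs : |t ^ (α 0) * besselI (α i) (r * ρ / t) * (m i θ * m i ω)| =
        t ^ (α 0) * besselI (α i) (r * ρ / t) * (|m i θ| * |m i ω|) := by
      rw [abs_mul, abs_of_pos (mul_pos htα hbI), abs_mul]
    rw [habs, ← hCalt i]
    calc t ^ (α 0) * besselI (α i) (r * ρ / t) * (|m i θ| * |m i ω|)
        ≤ C i * Real.exp (1 / 4) * (Cm * Cm) := by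
          apply mul_le_mul step1
            (mul_le_mul (hCm i θ) (hCm i ω) (abs_nonneg _) hCm0)
            (by positivity) (by nlinarith [hCpos i, Real.exp_pos (1/4 : ℝ)])
      _ = C i * (Real.exp (1 / 4) * (Cm * Cm)) := by ring
  have hts : Tendsto (fun t => ∑' i, f t i) atTop (nhds (∑' i, g i)) :=
    tendsto_tsum_of_dominated_convergence hbsum hab hbnd
  have hgsum : ∑' i, g i = C 0 * (m 0 θ * m 0 ω) := by
    rw [tsum_eq_single 0 (fun b hb => by simp [hg, hb])]
    simp [hg]
  have hexpneg : Tendsto (fun t : ℝ => Real.exp (-(r ^ 2 + ρ ^ 2) / (2 * t))) atTop (nhds 1) := by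
    have h1 : Tendsto (fun t : ℝ => -(r ^ 2 + ρ ^ 2) / (2 * t)) atTop (nhds 0) :=
      tendsto_const_nhds.div_atTop (tendsto_id.const_mul_atTop two_pos)
    simpa [Function.comp_def] using (Real.continuous_exp.tendsto 0).comp h1
  have hfinal : Tendsto
      (fun t => (r * ρ) ^ (-c) * Real.exp (-(r ^ 2 + ρ ^ 2) / (2 * t)) * ∑' i, f t i) atTop
      (nhds ((r * ρ) ^ (-c) * 1 * (C 0 * (m 0 θ * m 0 ω)))) := by
    rw [← hgsum]
    exact (tendsto_const_nhds.mul hexpneg).mul hts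
  have hval : (r * ρ) ^ (-c) * 1 * (C 0 * (m 0 θ * m 0 ω)) =
      (r ^ (α 0 - c) * m 0 θ) * (ρ ^ (α 0 - c) * m 0 ω) /
        (2 ^ (α 0) * Real.Gamma (1 + α 0)) := by
    have e2 : (r * ρ) ^ (-c) * (r * ρ) ^ (α 0) = (r * ρ) ^ (α 0 - c) := by
      rw [← Real.rpow_add hrρ, show -c + α 0 = α 0 - c by ring]
    rw [hCalt 0,
      show (r ^ (α 0 - c) * m 0 θ) * (ρ ^ (α 0 - c) * m 0 ω) =
        r ^ (α 0 - c) * ρ ^ (α 0 - c) * (m 0 θ * m 0 ω) by ring,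
      ← Real.mul_rpow hr.le hρ.le, ← e2]
    ring
  rw [← hval]
  apply hfinal.congr'
  filter_upwards [eventually_gt_atTop (0 : ℝ)] with t ht
  simp only [hf, conePV]
  have h1 : ∑' i, t ^ (α 0) * besselI (α i) (r * ρ / t) * (m i θ * m i ω) =
      t ^ (α 0) * ∑' i, besselI (α i) (r * ρ / t) * m i θ * m i ω := by
    rw [← tsum_mul_left]
    exact tsum_congr fun i => by ring
  rw [h1, show t ^ (1 + α 0) = t * t ^ (α 0) from by rw [Real.rpow_add ht, Real.rpow_one]]
  have ht0 : t ≠ 0 := ht.ne'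
  rw [hc]
  field_simp
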